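/- arXiv:2205.12592 — 3 statements merged into one kernel-verified Lean document; each statement's English description precedes it below -/
import Mathlib

section
/- Let n be a nonempty finite index type, M a symmetric square real matrix of size n, S a square real matrix of size n, and q̄ : n → ℝ with S *ᵥ q̄ = 0. If q : ℝ → (n → ℝ) is differentiable and satisfies M *ᵥ (q'(t)) + S *ᵥ (q(t)) = 0 for all t, then the Lyapunov function l(t) := (1/2) · (q(t) - q̄) ⬝ᵥ (M *ᵥ (q(t) - q̄)) is differentiable and satisfies the energy identity l'(t) = -(q(t) - q̄) ⬝ᵥ (S *ᵥ (q(t) - q̄)) for all t. -/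
open Matrix

/-- Energy identity for the quadratic Lyapunov function along the semi-discrete
dynamics `M q̇ + S q = 0` with equilibrium `q̄` (`S *ᵥ q̄ = 0`), for symmetric `M`:
`l(t) = (1/2)(q(t) - q̄) ⬝ᵥ (M *ᵥ (q(t) - q̄))` has derivative
`l'(t) = -(q(t) - q̄) ⬝ᵥ (S *ᵥ (q(t) - q̄))`. -/
theorem lyapunov_energy_identity
    {n : Type*} [Fintype n] [DecidableEq n] [Nonempty n]
    (M : Matrix n n ℝ) (hM : M.IsSymm) (S : Matrix n n ℝ)
    (qbar : n → ℝ) (hqbar : S *ᵥ qbar = 0)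
    (q q' : ℝ → (n → ℝ))
    (hq : ∀ t, HasDerivAt q (q' t) t)
    (hdyn : ∀ t, M *ᵥ q' t + S *ᵥ q t = 0) :
    ∀ t : ℝ,
      HasDerivAt (fun s => (1 / 2 : ℝ) * ((q s - qbar) ⬝ᵥ (M *ᵥ (q s - qbar))))
        (-((q t - qbar) ⬝ᵥ (S *ᵥ (q t - qbar)))) t := by
  intro t
  set e : ℝ → (n → ℝ) := fun s => q s - qbar with he_def
  have he : HasDerivAt e (q' t) t := (hq t).sub_const qbar
  have hei : ∀ i, HasDerivAt (fun s => e s i) (q' t i) t := by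
    intro i
    exact (hasDerivAt_pi.mp he) i
  have key : HasDerivAt (fun s => e s ⬝ᵥ (M *ᵥ e s))
      (q' t ⬝ᵥ (M *ᵥ e t) + e t ⬝ᵥ (M *ᵥ q' t)) t := by
    have hfun : ∀ s, e s ⬝ᵥ (M *ᵥ e s) = ∑ i, ∑ j, e s i * (M i j * e s j) := by
      intro s
      simp [dotProduct, mulVec, Finset.mul_sum]
    have hder : q' t ⬝ᵥ (M *ᵥ e t) + e t ⬝ᵥ (M *ᵥ q' t)
        = ∑ i, ∑ j, (q' t i * (M i j * e t j) + e t i * (M i j * q' t j)) := by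
      simp [dotProduct, mulVec, Finset.mul_sum, Finset.sum_add_distrib]
    rw [funext hfun, hder]
    apply HasDerivAt.fun_sum
    intro i _
    apply HasDerivAt.fun_sum
    intro j _
    exact (hei i).mul ((hei j).const_mul (M i j))
  have key2 := key.const_mul (1 / 2 : ℝ)
  convert key2 using 1
  case e'_4 => rfl
  case e'_5 => rfl
  have hMji : ∀ i j, M j i = M i j := fun i j => by
    conv_lhs => rw [← hM.eq]
    rfl
  have hsym : q' t ⬝ᵥ (M *ᵥ e t) = e t ⬝ᵥ (M *ᵥ q' t) := by
    simp only [dotProduct, mulVec, Finset.mul_sum]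
    rw [Finset.sum_comm]
    refine Finset.sum_congr rfl fun i _ => Finset.sum_congr rfl fun j _ => ?_
    rw [hMji]
    ring
  have hMq' : M *ᵥ q' t = -(S *ᵥ e t) := by
    have h1 : S *ᵥ e t = S *ᵥ q t := by
      simp [he_def, Matrix.mulVec_sub, hqbar]
    rw [h1]
    exact eq_neg_of_add_eq_zero_left (hdyn t)
  rw [hsym, hMq']
  simp only [dotProduct_neg]
  ring
end

section
/- Let n be a nonempty finite index type, M a symmetric positive-definite square real matrix of size n, S a square real matrix of size n, F : n → ℝ, and q̄ : n → ℝ with S *ᵥ q̄ = 0 and F ⬝ᵥ q̄ = 1. Assume that the quadratic form of S is strictly positive on the nonzero vectors of the discrete zero-mean subspace: for every w : n → ℝ with w ≠ 0 and F ⬝ᵥ w = 0, one has w ⬝ᵥ (S *ᵥ w) > 0. Let q : ℝ → (n → ℝ) be differentiable with M *ᵥ (q'(t)) + S *ᵥ (q(t)) = 0 and F ⬝ᵥ q(t) = 1 for all t. Then for every t with q(t) ≠ q̄, the derivative of the Lyapunov function l(t) := (1/2) · (q(t) - q̄) ⬝ᵥ (M *ᵥ (q(t) - q̄)) is strictly negative: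 l'(t) < 0. -/
open Matrix

/-- Strict Lyapunov decay for the semi-discrete FEM dynamics: with `M` symmetric
positive-definite, `S *ᵥ q̄ = 0`, `F ⬝ᵥ q̄ = 1`, the quadratic form of `S` strictly
positive on nonzero zero-mean vectors, and `q` a mass-preserving solution of
`M q̇ + S q = 0`, the Lyapunov function `l(t) = (1/2)(q(t)-q̄) ⬝ᵥ (M *ᵥ (q(t)-q̄))`
satisfies `l'(t) < 0` whenever `q(t) ≠ q̄`. -/
theorem lyapunov_strict_decay
    {n : Type*} [Fintype n] [DecidableEq n] [Nonempty n]
    (M : Matrix n n ℝ) (hM : M.PosDef) (S : Matrix n n ℝ)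
    (F : n → ℝ) (qbar : n → ℝ)
    (hqbar : S *ᵥ qbar = 0) (hmass : F ⬝ᵥ qbar = 1)
    (hpos : ∀ w : n → ℝ, w ≠ 0 → F ⬝ᵥ w = 0 → 0 < w ⬝ᵥ (S *ᵥ w))
    (q q' : ℝ → (n → ℝ))
    (hq : ∀ t, HasDerivAt q (q' t) t)
    (hdyn : ∀ t, M *ᵥ q' t + S *ᵥ q t = 0)
    (hqmass : ∀ t, F ⬝ᵥ q t = 1) :
    ∀ t : ℝ, q t ≠ qbar →
      deriv (fun s => (1 / 2 : ℝ) * ((q s - qbar) ⬝ᵥ (M *ᵥ (q s - qbar)))) t < 0 := by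
  intro t hne
  set w : n → ℝ := q t - qbar with hwdef
  have hw0 : w ≠ 0 := sub_ne_zero.mpr hne
  have hwF : F ⬝ᵥ w = 0 := by
    rw [hwdef, dotProduct_sub, hqmass t, hmass, sub_self]
  -- componentwise derivatives of q - qbar
  have hwi : ∀ i, HasDerivAt (fun s => q s i - qbar i) (q' t i) t := by
    intro i
    exact hasDerivAt_pi.mp ((hq t).sub_const qbar) i
  -- derivative of the quadratic form
  have key : HasDerivAt (fun s => (1 / 2 : ℝ) * ((q s - qbar) ⬝ᵥ (M *ᵥ (q s - qbar))))
      ((1 / 2 : ℝ) * (q' t ⬝ᵥ (M *ᵥ w) + w ⬝ᵥ (M *ᵥ q' t))) t := by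
    have h1 : HasDerivAt
        (fun s => ∑ i, (q s i - qbar i) * (∑ j, M i j * (q s j - qbar j)))
        (∑ i, (q' t i * (∑ j, M i j * (q t j - qbar j))
          + (q t i - qbar i) * (∑ j, M i j * q' t j))) t := by
      apply HasDerivAt.fun_sum
      intro i _
      have hinner : HasDerivAt (fun s => ∑ j, M i j * (q s j - qbar j))
          (∑ j, M i j * q' t j) t := by
        apply HasDerivAt.fun_sum
        intro j _
        exact (hwi j).const_mul (M i j)
      exact (hwi i).mul hinner
    have h2 := h1.const_mul (1 / 2 : ℝ)
    convert h2 using 1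
    case e'_4 => rfl
    case e'_5 => rfl
    case e'_8 => rfl
    rw [hwdef]
    simp [dotProduct, mulVec, Finset.sum_add_distrib, mul_add]
  rw [key.deriv]
  -- rewrite the derivative using symmetry and the dynamics
  have hsym : w ⬝ᵥ (M *ᵥ q' t) = q' t ⬝ᵥ (M *ᵥ w) := by
    have hT : Mᵀ = M := by simpa using hM.1.eq
    rw [dotProduct_mulVec, dotProduct_comm, ← mulVec_transpose, hT]
  have hMq' : M *ᵥ q' t = -(S *ᵥ w) := by
    have hS : S *ᵥ w = S *ᵥ q t := by
      rw [hwdef, mulVec_sub, hqbar, sub_zero]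
    rw [hS]
    have := hdyn t
    funext i
    have hi := congrFun this i
    simp only [Pi.add_apply, Pi.zero_apply] at hi
    simp only [Pi.neg_apply]
    linarith
  have hq'M : q' t ⬝ᵥ (M *ᵥ w) = -(w ⬝ᵥ (S *ᵥ w)) := by
    rw [← hsym, hMq', dotProduct_neg]
  rw [hsym, hq'M]
  have := hpos w hw0 hwF
  linarith
end

section
/- Let n be a nonempty finite index type, M a symmetric positive-definite square real matrix of size n, S a square real matrix of size n, F : n → ℝ, and q̄ : n → ℝ with S *ᵥ q̄ = 0 and F ⬝ᵥ q̄ = 1. Assume that for every w : n → ℝ with w ≠ 0 and F ⬝ᵥ w = 0, one has w ⬝ᵥ (S *ᵥ w) > 0. Let q : ℝ → (n → ℝ) be differentiable with M *ᵥ (q'(t)) + S *ᵥ (q(t)) = 0 and F ⬝ᵥ q(t) = 1 for all t. Then q(t) converges to q̄ as t → ∞ (with respect to any norm on n → ℝ); i.e., the equilibrium q̄ is globally asymptotically stable on the discrete mass-preserving subspace. -/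
open Matrix

section Aux

variable {n : Type*} [Fintype n]

private lemma quad_cont' (A : Matrix n n ℝ) :
    Continuous fun v : n → ℝ => v ⬝ᵥ (A *ᵥ v) := by
  simp only [dotProduct, mulVec]; fun_prop

private lemma quad_smul' (A : Matrix n n ℝ) (c : ℝ) (v : n → ℝ) :
    (c • v) ⬝ᵥ (A *ᵥ (c • v)) = c ^ 2 * (v ⬝ᵥ (A *ᵥ v)) := by
  simp [mulVec_smul, smul_dotProduct, dotProduct_smul, smul_eq_mul]; ring

private lemma quad_compare' (M S : Matrix n n ℝ) (P : Set (n → ℝ))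
    (hPc : IsClosed P) (hP0 : ∀ (c : ℝ) v, v ∈ P → c • v ∈ P)
    (hMp : ∀ v ∈ P, v ≠ 0 → 0 < v ⬝ᵥ (M *ᵥ v))
    (hSp : ∀ v ∈ P, v ≠ 0 → 0 < v ⬝ᵥ (S *ᵥ v)) :
    ∃ c > 0, ∀ v ∈ P, c * (v ⬝ᵥ (M *ᵥ v)) ≤ v ⬝ᵥ (S *ᵥ v) := by
  set K : Set (n → ℝ) := P ∩ Metric.sphere 0 1 with hK
  have hKc : IsCompact K := ((isCompact_sphere (0 : n → ℝ) 1).inter_left hPc)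
  rcases K.eq_empty_or_nonempty with hKe | hKne
  · refine ⟨1, one_pos, fun v hv => ?_⟩
    rcases eq_or_ne v 0 with rfl | hv0
    · simp
    · exfalso
      have h1 : (‖v‖⁻¹ • v) ∈ K := by
        refine ⟨hP0 _ _ hv, ?_⟩
        simp [norm_smul, abs_of_nonneg, inv_mul_cancel₀ (norm_ne_zero_iff.mpr hv0)]
      rw [hKe] at h1; exact h1
  · obtain ⟨vS, hvS, hminS⟩ := hKc.exists_isMinOn hKne (quad_cont' S).continuousOn
    obtain ⟨vM, hvM, hmaxM⟩ := hKc.exists_isMaxOn hKne (quad_cont' M).continuousOn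
    have hvSne : vS ≠ 0 := by
      have := hvS.2; simp only [Metric.mem_sphere, dist_zero_right] at this
      intro h; rw [h] at this; simp at this
    have hvMne : vM ≠ 0 := by
      have := hvM.2; simp only [Metric.mem_sphere, dist_zero_right] at this
      intro h; rw [h] at this; simp at this
    set s0 := vS ⬝ᵥ (S *ᵥ vS) with hs0
    set m1 := vM ⬝ᵥ (M *ᵥ vM) with hm1
    have hs0p : 0 < s0 := hSp _ hvS.1 hvSne
    have hm1p : 0 < m1 := hMp _ hvM.1 hvMne
    refine ⟨s0 / m1, div_pos hs0p hm1p, fun v hv => ?_⟩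
    rcases eq_or_ne v 0 with rfl | hv0
    · simp
    · have hnv : (0:ℝ) < ‖v‖ := norm_pos_iff.mpr hv0
      set u := ‖v‖⁻¹ • v with hu
      have huK : u ∈ K := by
        refine ⟨hP0 _ _ hv, ?_⟩
        simp [hu, norm_smul, abs_of_nonneg, inv_mul_cancel₀ hnv.ne']
      have hSu : s0 ≤ u ⬝ᵥ (S *ᵥ u) := hminS huK
      have hMu : u ⬝ᵥ (M *ᵥ u) ≤ m1 := hmaxM huK
      have hMv : v ⬝ᵥ (M *ᵥ v) = ‖v‖ ^ 2 * (u ⬝ᵥ (M *ᵥ u)) := by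
        rw [hu, quad_smul']; field_simp
      have hSv : v ⬝ᵥ (S *ᵥ v) = ‖v‖ ^ 2 * (u ⬝ᵥ (S *ᵥ u)) := by
        rw [hu, quad_smul']; field_simp
      rw [hMv, hSv]
      have h1 : s0 / m1 * (u ⬝ᵥ (M *ᵥ u)) ≤ s0 := by
        calc s0 / m1 * (u ⬝ᵥ (M *ᵥ u)) ≤ s0 / m1 * m1 :=
              mul_le_mul_of_nonneg_left hMu (div_pos hs0p hm1p).le
          _ = s0 := div_mul_cancel₀ _ hm1p.ne'
      have h2 := h1.trans hSu
      nlinarith [sq_nonneg ‖v‖]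

private lemma self_dot_pos' [DecidableEq n] (v : n → ℝ) (hv : v ≠ 0) :
    0 < v ⬝ᵥ (1 *ᵥ v) := by
  rw [one_mulVec]
  have h0 : 0 ≤ v ⬝ᵥ v := Finset.sum_nonneg fun i _ => mul_self_nonneg _
  rcases h0.lt_or_eq with h | h
  · exact h
  · exact absurd (dotProduct_self_eq_zero.mp h.symm) hv

private lemma norm_sq_le_self_dot' (v : n → ℝ) : ‖v‖ ^ 2 ≤ v ⬝ᵥ v := by
  have h0 : 0 ≤ v ⬝ᵥ v := Finset.sum_nonneg fun i _ => mul_self_nonneg _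
  have h1 : ‖v‖ ≤ Real.sqrt (v ⬝ᵥ v) := by
    rw [pi_norm_le_iff_of_nonneg (Real.sqrt_nonneg _)]
    intro i
    have h2 : v i ^ 2 ≤ v ⬝ᵥ v := by
      have := Finset.single_le_sum (f := fun j => v j * v j)
        (fun j _ => mul_self_nonneg (v j)) (Finset.mem_univ i)
      simpa [sq, dotProduct] using this
    calc ‖v i‖ = Real.sqrt ((v i) ^ 2) := by
          rw [Real.sqrt_sq_eq_abs]; rfl
      _ ≤ Real.sqrt (v ⬝ᵥ v) := Real.sqrt_le_sqrt h2
  calc ‖v‖ ^ 2 ≤ Real.sqrt (v ⬝ᵥ v) ^ 2 := by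
        exact pow_le_pow_left₀ (norm_nonneg _) h1 2
    _ = v ⬝ᵥ v := Real.sq_sqrt h0

private lemma double_sum_dot' (M : Matrix n n ℝ) (x y : n → ℝ) :
    (∑ i, ∑ j, x i * (M i j * y j)) = x ⬝ᵥ (M *ᵥ y) := by
  simp [dotProduct, mulVec, Finset.mul_sum]

private lemma quad_hasDerivAt' (M : Matrix n n ℝ) (w w' : ℝ → n → ℝ)
    (hw : ∀ t, HasDerivAt w (w' t) t) (t : ℝ) :
    HasDerivAt (fun t => w t ⬝ᵥ (M *ᵥ w t))
      (w' t ⬝ᵥ (M *ᵥ w t) + w t ⬝ᵥ (M *ᵥ w' t)) t := by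
  have hcomp : ∀ s i, HasDerivAt (fun τ => w τ i) (w' s i) s := fun s i =>
    (hasDerivAt_pi.mp (hw s)) i
  have heq : (fun τ => w τ ⬝ᵥ (M *ᵥ w τ)) = fun τ => ∑ i, ∑ j, w τ i * (M i j * w τ j) :=
    funext fun s => (double_sum_dot' M (w s) (w s)).symm
  rw [heq]
  have key : HasDerivAt (fun τ => ∑ i, ∑ j, w τ i * (M i j * w τ j))
      (∑ i, ∑ j, (w' t i * (M i j * w t j) + w t i * (M i j * w' t j))) t := by
    apply HasDerivAt.fun_sum; intro i _
    apply HasDerivAt.fun_sum; intro j _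
    exact (hcomp t i).mul ((hcomp t j).const_mul (M i j))
  convert key using 1
  rw [← double_sum_dot' M (w' t) (w t), ← double_sum_dot' M (w t) (w' t),
    ← Finset.sum_add_distrib]
  exact Finset.sum_congr rfl fun i _ => (Finset.sum_add_distrib).symm

private lemma posdef_symm_swap' (M : Matrix n n ℝ) (hM : M.PosDef) (x y : n → ℝ) :
    x ⬝ᵥ (M *ᵥ y) = y ⬝ᵥ (M *ᵥ x) := by
  have hsymm : Mᵀ = M := by
    have := hM.1; rwa [Matrix.IsHermitian, conjTranspose_eq_transpose_of_trivial] at this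
  rw [dotProduct_mulVec, ← mulVec_transpose, hsymm, dotProduct_comm]

end Aux

/-- Global asymptotic stability on the discrete mass-preserving subspace: with `M`
symmetric positive-definite, `S *ᵥ q̄ = 0`, `F ⬝ᵥ q̄ = 1`, the quadratic form of `S`
strictly positive on nonzero zero-mean vectors, and `q` a mass-preserving solution of
`M q̇ + S q = 0`, the density `q(t)` converges to the equilibrium `q̄` as `t → ∞`. -/
theorem equilibrium_globally_asymptotically_stable
    {n : Type*} [Fintype n] [DecidableEq n] [Nonempty n]
    (M : Matrix n n ℝ) (hM : M.PosDef) (S : Matrix n n ℝ)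
    (F : n → ℝ) (qbar : n → ℝ)
    (hqbar : S *ᵥ qbar = 0) (hmass : F ⬝ᵥ qbar = 1)
    (hpos : ∀ w : n → ℝ, w ≠ 0 → F ⬝ᵥ w = 0 → 0 < w ⬝ᵥ (S *ᵥ w))
    (q q' : ℝ → (n → ℝ))
    (hq : ∀ t, HasDerivAt q (q' t) t)
    (hdyn : ∀ t, M *ᵥ q' t + S *ᵥ q t = 0)
    (hqmass : ∀ t, F ⬝ᵥ q t = 1) :
    Filter.Tendsto q Filter.atTop (nhds qbar) := by
  classical
  set w : ℝ → n → ℝ := fun t => q t - qbar with hwdef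
  have hw : ∀ t, HasDerivAt w (q' t) t := fun t => (hq t).sub_const qbar
  have hFw : ∀ t, F ⬝ᵥ w t = 0 := fun t => by
    simp [hwdef, dotProduct_sub, hqmass t, hmass]
  have hMq' : ∀ t, M *ᵥ q' t = -(S *ᵥ w t) := fun t => by
    have hSw : S *ᵥ w t = S *ᵥ q t := by simp [hwdef, mulVec_sub, hqbar]
    rw [hSw]; exact eq_neg_of_add_eq_zero_left (hdyn t)
  -- the zero-mean subspace
  set P : Set (n → ℝ) := {v | F ⬝ᵥ v = 0} with hPdef
  have hPc : IsClosed P := by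
    have hcont : Continuous fun v : n → ℝ => F ⬝ᵥ v := by
      simp only [dotProduct]; fun_prop
    exact isClosed_eq hcont continuous_const
  have hP0 : ∀ (c : ℝ) v, v ∈ P → c • v ∈ P := by
    intro c v hv
    simp only [hPdef, Set.mem_setOf_eq] at hv ⊢
    rw [dotProduct_smul, hv, smul_zero]
  -- constant c : S dominates c * M on P
  obtain ⟨c, hc0, hc⟩ := quad_compare' M S P hPc hP0
    (fun v _ hv => by simpa using hM.dotProduct_mulVec_pos hv) (fun v hvP hv => hpos v hv hvP)
  -- constant m : M dominates m * ‖·‖²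
  obtain ⟨m, hm0, hm⟩ := quad_compare' 1 M Set.univ isClosed_univ
    (fun _ _ _ => Set.mem_univ _) (fun v _ hv => self_dot_pos' v hv)
    (fun v _ hv => by simpa using hM.dotProduct_mulVec_pos hv)
  -- Lyapunov function
  set V : ℝ → ℝ := fun t => w t ⬝ᵥ (M *ᵥ w t) with hVdef
  have hVnonneg : ∀ t, 0 ≤ V t := by
    intro t
    rcases eq_or_ne (w t) 0 with h | h
    · simp [hVdef, h]
    · exact (by simpa using hM.dotProduct_mulVec_pos h : 0 < V t).le
  have hVd : ∀ t, HasDerivAt V (-(2 * (w t ⬝ᵥ (S *ᵥ w t)))) t := by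
    intro t
    have h1 := quad_hasDerivAt' M w q' hw t
    have e : q' t ⬝ᵥ (M *ᵥ w t) + w t ⬝ᵥ (M *ᵥ q' t) = -(2 * (w t ⬝ᵥ (S *ᵥ w t))) := by
      rw [posdef_symm_swap' M hM (q' t) (w t), hMq' t, dotProduct_neg]; ring
    rwa [e] at h1
  -- exponential decay of V
  have hexp : ∀ t : ℝ, HasDerivAt (fun s => Real.exp (2 * c * s))
      (Real.exp (2 * c * t) * (2 * c)) t := by
    intro t
    exact (((hasDerivAt_id t).const_mul (2 * c)).congr_deriv (mul_one _)).exp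
  set g : ℝ → ℝ := fun t => V t * Real.exp (2 * c * t) with hgdef
  have hgd : ∀ t, HasDerivAt g
      (-(2 * (w t ⬝ᵥ (S *ᵥ w t))) * Real.exp (2 * c * t)
        + V t * (Real.exp (2 * c * t) * (2 * c))) t :=
    fun t => (hVd t).mul (hexp t)
  have hganti : Antitone g := by
    apply antitone_of_deriv_nonpos
    · exact fun t => (hgd t).differentiableAt
    · intro t
      rw [(hgd t).deriv]
      have h1 : c * V t ≤ w t ⬝ᵥ (S *ᵥ w t) := hc (w t) (hFw t)
      nlinarith [Real.exp_pos (2 * c * t)]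
  have hbound : ∀ t : ℝ, 0 ≤ t → V t ≤ V 0 * Real.exp (-(2 * c * t)) := by
    intro t ht
    have h1 : g t ≤ g 0 := hganti ht
    have h2 : g 0 = V 0 := by simp [hgdef]
    calc V t = V t * Real.exp (2 * c * t) * Real.exp (-(2 * c * t)) := by
          rw [mul_assoc, ← Real.exp_add, add_neg_cancel, Real.exp_zero, mul_one]
      _ ≤ V 0 * Real.exp (-(2 * c * t)) := by
          apply mul_le_mul_of_nonneg_right _ (Real.exp_nonneg _)
          rw [← h2]; exact h1
  have hVtend : Filter.Tendsto V Filter.atTop (nhds 0) := by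
    have hlin : Filter.Tendsto (fun t : ℝ => -(2 * c * t)) Filter.atTop Filter.atBot := by
      have := Filter.Tendsto.const_mul_atTop (by positivity : (0:ℝ) < 2 * c)
        (Filter.tendsto_id (α := ℝ))
      exact Filter.tendsto_neg_atBot_iff.mpr this
    have hexp0 : Filter.Tendsto (fun t : ℝ => V 0 * Real.exp (-(2 * c * t)))
        Filter.atTop (nhds 0) := by
      have h1 := (Real.tendsto_exp_atBot.comp hlin).const_mul (V 0)
      simpa using h1
    exact squeeze_zero' (Filter.Eventually.of_forall hVnonneg)
      ((Filter.eventually_ge_atTop (0:ℝ)).mono fun t ht => hbound t ht) hexp0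
  -- from V → 0 deduce ‖w‖ → 0
  have hwV : ∀ t, ‖w t‖ ^ 2 ≤ m⁻¹ * V t := by
    intro t
    have h1 : m * (w t ⬝ᵥ (1 *ᵥ w t)) ≤ V t := hm (w t) (Set.mem_univ _)
    have h2 : ‖w t‖ ^ 2 ≤ w t ⬝ᵥ (1 *ᵥ w t) := by
      rw [one_mulVec]; exact norm_sq_le_self_dot' (w t)
    rw [le_inv_mul_iff₀ hm0]
    nlinarith
  have hsq : Filter.Tendsto (fun t => ‖w t‖ ^ 2) Filter.atTop (nhds 0) := by
    have h1 : Filter.Tendsto (fun t => m⁻¹ * V t) Filter.atTop (nhds 0) := by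
      have := hVtend.const_mul m⁻¹; simpa using this
    exact squeeze_zero' (Filter.Eventually.of_forall fun t => sq_nonneg _)
      (Filter.Eventually.of_forall hwV) h1
  have hnw : Filter.Tendsto (fun t => ‖w t‖) Filter.atTop (nhds 0) := by
    have h1 : Filter.Tendsto (fun t => Real.sqrt (‖w t‖ ^ 2)) Filter.atTop
        (nhds (Real.sqrt 0)) :=
      (Real.continuous_sqrt.continuousAt).tendsto.comp hsq
    simpa [Real.sqrt_sq (norm_nonneg _)] using h1
  rw [tendsto_iff_norm_sub_tendsto_zero]
  exact hnw
end
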